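/- With notation as in the bijection construction: Φ(Θ(T')) = T' for every spanning tree T' of G rooted at 0; hence Θ is a bijection between the set of spanning trees of G rooted at 0 and the set of G-parking functions. -/

import Mathlib

open Finset

open scoped Classical

/-- A subtree of the digraph (with multiplicity function `E`) on vertices
`{0,...,n}`, rooted at `0`: every non-root vertex of the subtree has a unique
outgoing edge (its parent together with the index of a parallel edge), and
iterating parents reaches the root. -/
structure Subtree (n : ℕ) (E : Fin (n+1) → Fin (n+1) → ℕ) where
  par : Fin (n+1) → Option (Fin (n+1) × ℕ)
  root_par : par 0 = none
  edge_valid : ∀ v p k, par v = some (p, k) → k < E v p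
  parent_mem : ∀ v p k, par v = some (p, k) → p = 0 ∨ (par p).isSome
  reaches : ∀ v, (par v).isSome →
    Relation.ReflTransGen (fun a c => ∃ k, par a = some (c, k)) v 0

noncomputable def Subtree.verts {n : ℕ} {E : Fin (n+1) → Fin (n+1) → ℕ}
    (t : Subtree n E) : Finset (Fin (n+1)) :=
  Finset.univ.filter (fun v => v = 0 ∨ (t.par v).isSome)

def Subtree.IsSubtreeOf {n : ℕ} {E : Fin (n+1) → Fin (n+1) → ℕ}
    (t T : Subtree n E) : Prop :=
  ∀ v, (t.par v).isSome → t.par v = T.par v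

def Subtree.IsSpanning {n : ℕ} {E : Fin (n+1) → Fin (n+1) → ℕ}
    (T : Subtree n E) : Prop :=
  ∀ v, v ∈ T.verts

/-- `b` is a `G`-parking function: for every non-empty set `U` of non-root
vertices there is `j ∈ U` with more than `b j` edges from `j` to the
complement of `U`. (The value `b 0` at the root is irrelevant.) -/
def IsParking {n : ℕ} (E : Fin (n+1) → Fin (n+1) → ℕ) (b : Fin (n+1) → ℕ) : Prop :=
  ∀ U : Finset (Fin (n+1)), U.Nonempty → 0 ∉ U → ∃ j ∈ U, b j < ∑ i ∈ Uᶜ, E j i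

/-- An assignment of a relation on vertices to every rooted subtree. -/
structure TreeOrders (n : ℕ) (E : Fin (n+1) → Fin (n+1) → ℕ) where
  lt : Subtree n E → Fin (n+1) → Fin (n+1) → Prop

/-- A proper set of tree orders: each `lt T` is a strict total order on the
vertices of `T`, parents are smaller than children, and the orders are
consistent under restriction to rooted subtrees. -/
def TreeOrders.Proper {n : ℕ} {E : Fin (n+1) → Fin (n+1) → ℕ}
    (P : TreeOrders n E) : Prop :=
  (∀ T : Subtree n E, ∀ i ∈ T.verts, ¬ P.lt T i i) ∧
  (∀ T : Subtree n E, ∀ i ∈ T.verts, ∀ j ∈ T.verts, ∀ l ∈ T.verts,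
     P.lt T i j → P.lt T j l → P.lt T i l) ∧
  (∀ T : Subtree n E, ∀ i ∈ T.verts, ∀ j ∈ T.verts, i ≠ j → P.lt T i j ∨ P.lt T j i) ∧
  (∀ T : Subtree n E, ∀ j q k, T.par j = some (q, k) → P.lt T q j) ∧
  (∀ t T : Subtree n E, t.IsSubtreeOf T →
     ∀ i ∈ t.verts, ∀ j ∈ t.verts, (P.lt t i j ↔ P.lt T i j))

/-- The number of edges out of `j` that are smaller (w.r.t. the order `lt` on
targets, parallel edges broken by their index) than the edge `(j,q)` with
parallel index `k`. -/
noncomputable def thetaVal {n : ℕ} (E : Fin (n+1) → Fin (n+1) → ℕ)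
    (lt : Fin (n+1) → Fin (n+1) → Prop) (j q : Fin (n+1)) (k : ℕ) : ℕ :=
  (∑ i ∈ Finset.univ.filter (fun i => lt i q), E j i) + k

/-- The map Θ: given a tree order assignment, send a tree to the tuple whose
`j`-th entry counts the edges out of `j` smaller than the tree edge out of `j`. -/
noncomputable def Theta {n : ℕ} (E : Fin (n+1) → Fin (n+1) → ℕ)
    (P : TreeOrders n E) (T : Subtree n E) : Fin (n+1) → ℕ :=
  fun j => match T.par j with
  | none => 0
  | some (q, k) => thetaVal E (P.lt T) j q k

/-- `(q,k)` is the edge from `j` into the vertex set `S` such that exactly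
`bj` edges from `j` into `S` are smaller than it (w.r.t. `lt`, parallel edges
broken by index). -/
def ChosenEdge {n : ℕ} (E : Fin (n+1) → Fin (n+1) → ℕ) (S : Finset (Fin (n+1)))
    (lt : Fin (n+1) → Fin (n+1) → Prop) (bj : ℕ) (j q : Fin (n+1)) (k : ℕ) : Prop :=
  q ∈ S ∧ k < E j q ∧ (∑ i ∈ S.filter (fun i => lt i q), E j i) + k = bj

/-- A run of the inductive construction of Φ(b): start with the tree on the
root alone; at step `m` consider the set `V_m` of vertices `j` outside
`t (m-1)` with at least `b j + 1` edges into `t (m-1)`, adjoin all of them by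
their chosen edges to form an auxiliary tree, and let `p m` be the smallest
vertex of `V_m` in the order of that auxiliary tree; `t m` is `t (m-1)` with
`p m` adjoined by its chosen edge. -/
structure PhiRun {n : ℕ} (E : Fin (n+1) → Fin (n+1) → ℕ) (P : TreeOrders n E)
    (b : Fin (n+1) → ℕ) where
  t : ℕ → Subtree n E
  p : ℕ → Fin (n+1)
  init : ∀ v, (t 0).par v = none
  p0 : p 0 = 0
  sub : ∀ m, 1 ≤ m → m ≤ n → (t (m-1)).IsSubtreeOf (t m)
  newvert : ∀ m, 1 ≤ m → m ≤ n → p m ∉ (t (m-1)).verts ∧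
      ∀ v, v ≠ p m → (t m).par v = (t (m-1)).par v
  eligible : ∀ m, 1 ≤ m → m ≤ n →
      b (p m) + 1 ≤ ∑ i ∈ (t (m-1)).verts, E (p m) i
  chosen : ∀ m, 1 ≤ m → m ≤ n → ∃ q k, (t m).par (p m) = some (q, k) ∧
      ChosenEdge E (t (m-1)).verts (P.lt (t (m-1))) (b (p m)) (p m) q k
  minimal : ∀ m, 1 ≤ m → m ≤ n → ∃ taux : Subtree n E,
      (t (m-1)).IsSubtreeOf taux ∧
      (∀ j, j ∈ taux.verts ↔ (j ∈ (t (m-1)).verts ∨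
          (j ∉ (t (m-1)).verts ∧ b j + 1 ≤ ∑ i ∈ (t (m-1)).verts, E j i))) ∧
      (∀ j, j ∉ (t (m-1)).verts → b j + 1 ≤ ∑ i ∈ (t (m-1)).verts, E j i →
        ∃ q k, taux.par j = some (q, k) ∧
          ChosenEdge E (t (m-1)).verts (P.lt (t (m-1))) (b j) j q k) ∧
      (∀ j, j ∉ (t (m-1)).verts → b j + 1 ≤ ∑ i ∈ (t (m-1)).verts, E j i →
        j ≠ p m → P.lt taux (p m) j)

section OrderAux
variable {α : Type*}

lemma exists_rel_max (lt : α → α → Prop) :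
    ∀ S : Finset α, S.Nonempty →
    (∀ i ∈ S, ∀ j ∈ S, i ≠ j → lt i j ∨ lt j i) →
    (∀ i ∈ S, ∀ j ∈ S, ∀ k ∈ S, lt i j → lt j k → lt i k) →
    ∃ q ∈ S, ∀ i ∈ S, i ≠ q → lt i q := by
  classical
  intro S
  induction S using Finset.induction_on with
  | empty => intro h; simp at h
  | @insert a S' ha IH =>
    intro _ htot htrans
    rcases S'.eq_empty_or_nonempty with h | h
    · subst h; exact ⟨a, by simp, by simp⟩
    · obtain ⟨q', hq', hmax⟩ := IH h
        (fun i hi j hj => htot i (by simp [hi]) j (by simp [hj]))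
        (fun i hi j hj k hk => htrans i (by simp [hi]) j (by simp [hj]) k (by simp [hk]))
      have haq : a ≠ q' := fun h' => ha (h' ▸ hq')
      rcases htot a (by simp) q' (by simp [hq']) haq with hlt | hlt
      · refine ⟨q', by simp [hq'], ?_⟩
        intro i hi hiq
        rcases Finset.mem_insert.1 hi with rfl | hi'
        · exact hlt
        · exact hmax i hi' hiq
      · refine ⟨a, by simp, ?_⟩
        intro i hi hia
        rcases Finset.mem_insert.1 hi with rfl | hi'
        · exact absurd rfl hia
        · rcases eq_or_ne i q' with rfl | hiq'
          · exact hlt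
          · exact htrans i (by simp [hi']) q' (by simp [hq']) a (by simp)
              (hmax i hi' hiq') hlt

lemma exists_rel_min (lt : α → α → Prop) (S : Finset α) (hne : S.Nonempty)
    (htot : ∀ i ∈ S, ∀ j ∈ S, i ≠ j → lt i j ∨ lt j i)
    (htrans : ∀ i ∈ S, ∀ j ∈ S, ∀ k ∈ S, lt i j → lt j k → lt i k) :
    ∃ q ∈ S, ∀ i ∈ S, i ≠ q → lt q i := by
  obtain ⟨q, hq, h⟩ := exists_rel_max (fun a b => lt b a) S hne
    (fun i hi j hj hij => (htot i hi j hj hij).symm)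
    (fun i hi j hj k hk h1 h2 => htrans k hk j hj i hi h2 h1)
  exact ⟨q, hq, fun i hi hiq => h i hi hiq⟩

lemma chosen_exists_gen [DecidableEq α] (lt : α → α → Prop) (f : α → ℕ) :
    ∀ S : Finset α,
    (∀ i ∈ S, ∀ j ∈ S, i ≠ j → lt i j ∨ lt j i) →
    (∀ i ∈ S, ∀ j ∈ S, ∀ k ∈ S, lt i j → lt j k → lt i k) →
    (∀ i ∈ S, ¬ lt i i) →
    ∀ bj : ℕ, bj + 1 ≤ ∑ i ∈ S, f i →
    ∃ q ∈ S, ∃ k, k < f q ∧ (∑ i ∈ S.filter (fun i => lt i q), f i) + k = bj := by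
  intro S
  induction S using Finset.strongInduction with
  | _ S IH =>
    intro htot htrans hirr bj hbj
    have hne : S.Nonempty := by
      rcases S.eq_empty_or_nonempty with rfl | h
      · simp at hbj
      · exact h
    obtain ⟨q0, hq0, hmax⟩ := exists_rel_max lt S hne htot htrans
    have hfilt : S.filter (fun i => lt i q0) = S.erase q0 := by
      ext i
      simp only [Finset.mem_filter, Finset.mem_erase]
      constructor
      · rintro ⟨hi, hlt⟩
        exact ⟨fun h => hirr q0 hq0 (h ▸ hlt), hi⟩
      · rintro ⟨hne', hi⟩
        exact ⟨hi, hmax i hi hne'⟩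
    have hsum : ∑ i ∈ S.erase q0, f i + f q0 = ∑ i ∈ S, f i :=
      Finset.sum_erase_add S f hq0
    by_cases hc : ∑ i ∈ S.erase q0, f i ≤ bj
    · refine ⟨q0, hq0, bj - ∑ i ∈ S.erase q0, f i, ?_, ?_⟩
      · omega
      · rw [hfilt]; omega
    · push_neg at hc
      have hstrict : S.erase q0 ⊂ S := Finset.erase_ssubset hq0
      obtain ⟨q, hq, k, hk, hsum'⟩ := IH (S.erase q0) hstrict
        (fun i hi j hj => htot i (Finset.mem_of_mem_erase hi) j (Finset.mem_of_mem_erase hj))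
        (fun i hi j hj k hk' => htrans i (Finset.mem_of_mem_erase hi) j
          (Finset.mem_of_mem_erase hj) k (Finset.mem_of_mem_erase hk'))
        (fun i hi => hirr i (Finset.mem_of_mem_erase hi)) bj hc
      have hqS : q ∈ S := Finset.mem_of_mem_erase hq
      have hqq0 : q ≠ q0 := (Finset.mem_erase.1 hq).1
      have : S.filter (fun i => lt i q) = (S.erase q0).filter (fun i => lt i q) := by
        ext i
        simp only [Finset.mem_filter, Finset.mem_erase]
        constructor
        · rintro ⟨hi, hlt⟩
          refine ⟨⟨?_, hi⟩, hlt⟩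
          intro hEq
          rw [hEq] at hlt
          exact hirr q0 hq0 (htrans q0 hq0 q hqS q0 hq0 hlt (hmax q hqS hqq0))
        · rintro ⟨⟨_, hi⟩, hlt⟩
          exact ⟨hi, hlt⟩
      exact ⟨q, hqS, k, hk, by rw [this]; exact hsum'⟩

lemma chosen_unique_gen [DecidableEq α] (lt : α → α → Prop) (f : α → ℕ) (S : Finset α)
    (htot : ∀ i ∈ S, ∀ j ∈ S, i ≠ j → lt i j ∨ lt j i)
    (htrans : ∀ i ∈ S, ∀ j ∈ S, ∀ k ∈ S, lt i j → lt j k → lt i k)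
    (hirr : ∀ i ∈ S, ¬ lt i i) (bj : ℕ) {q1 q2 : α} {k1 k2 : ℕ}
    (h1 : q1 ∈ S ∧ k1 < f q1 ∧ (∑ i ∈ S.filter (fun i => lt i q1), f i) + k1 = bj)
    (h2 : q2 ∈ S ∧ k2 < f q2 ∧ (∑ i ∈ S.filter (fun i => lt i q2), f i) + k2 = bj) :
    q1 = q2 ∧ k1 = k2 := by
  obtain ⟨hq1, hk1, hs1⟩ := h1
  obtain ⟨hq2, hk2, hs2⟩ := h2
  have key : ∀ a b : α, a ∈ S → b ∈ S → lt a b →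
      ∀ ka kb, ka < f a → (∑ i ∈ S.filter (fun i => lt i a), f i) + ka = bj →
      (∑ i ∈ S.filter (fun i => lt i b), f i) + kb = bj → False := by
    intro a b ha hb hab ka kb hka hsa hsb
    have hsub : insert a (S.filter (fun i => lt i a)) ⊆ S.filter (fun i => lt i b) := by
      intro i hi
      rcases Finset.mem_insert.1 hi with rfl | hi'
      · exact Finset.mem_filter.2 ⟨ha, hab⟩
      · obtain ⟨hiS, hia⟩ := Finset.mem_filter.1 hi'
        exact Finset.mem_filter.2 ⟨hiS, htrans i hiS a ha b hb hia hab⟩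
    have hnm : a ∉ S.filter (fun i => lt i a) := by
      simp only [Finset.mem_filter]
      exact fun h => hirr a ha h.2
    have := Finset.sum_le_sum_of_subset (f := f) hsub
    rw [Finset.sum_insert hnm] at this
    omega
  rcases eq_or_ne q1 q2 with rfl | hne
  · exact ⟨rfl, by omega⟩
  · rcases htot q1 hq1 q2 hq2 hne with h | h
    · exact absurd (key q1 q2 hq1 hq2 h k1 k2 hk1 hs1 hs2) not_false
    · exact absurd (key q2 q1 hq2 hq1 h k2 k1 hk2 hs2 hs1) not_false

end OrderAux
section Basics
variable {n : ℕ} {E : Fin (n+1) → Fin (n+1) → ℕ}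

lemma Subtree.mem_verts {t : Subtree n E} {v : Fin (n+1)} :
    v ∈ t.verts ↔ v = 0 ∨ (t.par v).isSome := by
  simp [Subtree.verts]

lemma Subtree.root_mem (t : Subtree n E) : (0 : Fin (n+1)) ∈ t.verts :=
  Subtree.mem_verts.2 (Or.inl rfl)

lemma Subtree.mem_of_some {t : Subtree n E} {v q : Fin (n+1)} {k : ℕ}
    (h : t.par v = some (q, k)) : v ∈ t.verts ∧ q ∈ t.verts := by
  refine ⟨Subtree.mem_verts.2 (Or.inr (by simp [h])), ?_⟩
  rcases t.parent_mem v q k h with h0 | hs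
  · exact h0 ▸ t.root_mem
  · exact Subtree.mem_verts.2 (Or.inr hs)

lemma Subtree.IsSubtreeOf.rfl' (t : Subtree n E) : t.IsSubtreeOf t := fun _ _ => rfl

lemma Subtree.IsSubtreeOf.trans' {t u T : Subtree n E} (h1 : t.IsSubtreeOf u)
    (h2 : u.IsSubtreeOf T) : t.IsSubtreeOf T := by
  intro v hv
  have e1 := h1 v hv
  rw [e1]
  exact h2 v (e1 ▸ hv)

lemma Subtree.IsSubtreeOf.verts_subset {t T : Subtree n E} (h : t.IsSubtreeOf T) :
    t.verts ⊆ T.verts := by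
  intro v hv
  rcases Subtree.mem_verts.1 hv with rfl | hs
  · exact T.root_mem
  · exact Subtree.mem_verts.2 (Or.inr (by rw [← h v hs]; exact hs))

lemma Subtree.spanning_iff {T : Subtree n E} : T.IsSpanning ↔ T.verts = Finset.univ := by
  constructor
  · intro h; exact Finset.eq_univ_of_forall h
  · intro h v; rw [h]; exact Finset.mem_univ v

lemma Subtree.ext' {t T : Subtree n E} (h : ∀ v, t.par v = T.par v) : t = T := by
  have : t.par = T.par := funext h
  cases t; cases T; cases this; rfl

variable {P : TreeOrders n E}

lemma lt_asymm' (hP : P.Proper) (T : Subtree n E) {i j : Fin (n+1)}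
    (hi : i ∈ T.verts) (hj : j ∈ T.verts) (h1 : P.lt T i j) (h2 : P.lt T j i) : False :=
  hP.1 T i hi (hP.2.1 T i hi j hj i hi h1 h2)

lemma root_lt (hP : P.Proper) (T : Subtree n E) {w : Fin (n+1)}
    (hw : w ∈ T.verts) (hw0 : w ≠ 0) : P.lt T 0 w := by
  have hsome : (T.par w).isSome := by
    rcases Subtree.mem_verts.1 hw with h | h
    · exact absurd h hw0
    · exact h
  have key : ∀ a, Relation.ReflTransGen (fun a c => ∃ k, T.par a = some (c, k)) a 0 →
      a = 0 ∨ P.lt T 0 a := by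
    intro a h
    induction h using Relation.ReflTransGen.head_induction_on with
    | refl => exact Or.inl rfl
    | @head a' c h' hrest ih =>
      obtain ⟨k, hk⟩ := h'
      have hca : P.lt T c a' := hP.2.2.2.1 T a' c k hk
      have hmem := Subtree.mem_of_some hk
      rcases ih with rfl | h0c
      · exact Or.inr hca
      · exact Or.inr (hP.2.1 T 0 (T.root_mem) c hmem.2 a' hmem.1 h0c hca)
  rcases key w (T.reaches w hsome) with rfl | h
  · exact absurd rfl hw0
  · exact h

/-- `S` is an initial segment w.r.t. the order of `T`. -/
def Initial {n : ℕ} {E : Fin (n+1) → Fin (n+1) → ℕ} (P : TreeOrders n E)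
    (T : Subtree n E) (S : Finset (Fin (n+1))) : Prop :=
  ∀ v ∈ S, ∀ w, w ∉ S → P.lt T v w

end Basics
section RunBasics
variable {n : ℕ} {E : Fin (n+1) → Fin (n+1) → ℕ} {P : TreeOrders n E} {b : Fin (n+1) → ℕ}

namespace PhiRun
variable (r : PhiRun E P b)

lemma sub' (m : ℕ) (h : m + 1 ≤ n) : (r.t m).IsSubtreeOf (r.t (m+1)) := by
  simpa using r.sub (m+1) (by omega) (by omega)

lemma newvert' (m : ℕ) (h : m + 1 ≤ n) : r.p (m+1) ∉ (r.t m).verts ∧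
    ∀ v, v ≠ r.p (m+1) → (r.t (m+1)).par v = (r.t m).par v := by
  simpa using r.newvert (m+1) (by omega) (by omega)

lemma eligible' (m : ℕ) (h : m + 1 ≤ n) :
    b (r.p (m+1)) + 1 ≤ ∑ i ∈ (r.t m).verts, E (r.p (m+1)) i := by
  simpa using r.eligible (m+1) (by omega) (by omega)

lemma chosen' (m : ℕ) (h : m + 1 ≤ n) : ∃ q k, (r.t (m+1)).par (r.p (m+1)) = some (q, k) ∧
    ChosenEdge E (r.t m).verts (P.lt (r.t m)) (b (r.p (m+1))) (r.p (m+1)) q k := by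
  simpa using r.chosen (m+1) (by omega) (by omega)

lemma minimal' (m : ℕ) (h : m + 1 ≤ n) : ∃ taux : Subtree n E,
    (r.t m).IsSubtreeOf taux ∧
    (∀ j, j ∈ taux.verts ↔ (j ∈ (r.t m).verts ∨
        (j ∉ (r.t m).verts ∧ b j + 1 ≤ ∑ i ∈ (r.t m).verts, E j i))) ∧
    (∀ j, j ∉ (r.t m).verts → b j + 1 ≤ ∑ i ∈ (r.t m).verts, E j i →
      ∃ q k, taux.par j = some (q, k) ∧
        ChosenEdge E (r.t m).verts (P.lt (r.t m)) (b j) j q k) ∧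
    (∀ j, j ∉ (r.t m).verts → b j + 1 ≤ ∑ i ∈ (r.t m).verts, E j i →
      j ≠ r.p (m+1) → P.lt taux (r.p (m+1)) j) := by
  simpa using r.minimal (m+1) (by omega) (by omega)

lemma verts_zero : (r.t 0).verts = {0} := by
  ext v; simp [Subtree.mem_verts, r.init]

lemma verts_succ (m : ℕ) (h : m + 1 ≤ n) :
    (r.t (m+1)).verts = insert (r.p (m+1)) (r.t m).verts := by
  obtain ⟨q, k, hpar, _⟩ := r.chosen' m h
  ext v
  rcases eq_or_ne v (r.p (m+1)) with rfl | hv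
  · simp [Subtree.mem_verts, hpar]
  · simp [Subtree.mem_verts, (r.newvert' m h).2 v hv, hv]

lemma verts_card : ∀ m, m ≤ n → ((r.t m).verts).card = m + 1 := by
  intro m
  induction m with
  | zero => intro _; simp [r.verts_zero]
  | succ m ih =>
    intro h
    rw [r.verts_succ m h, Finset.card_insert_of_notMem (r.newvert' m h).1, ih (by omega)]

lemma chain (m : ℕ) : ∀ m', m ≤ m' → m' ≤ n → (r.t m).IsSubtreeOf (r.t m') := by
  intro m'
  induction m' with
  | zero =>
    intro h1 _
    obtain rfl : m = 0 := Nat.le_zero.mp h1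
    exact Subtree.IsSubtreeOf.rfl' _
  | succ k ih =>
    intro h1 h2
    rcases Nat.lt_or_ge m (k+1) with hlt | hge
    · exact (ih (by omega) (by omega)).trans' (r.sub' k h2)
    · obtain rfl : m = k+1 := by omega
      exact Subtree.IsSubtreeOf.rfl' _

lemma spanning_top : (r.t n).IsSpanning := by
  rw [Subtree.spanning_iff]
  apply Finset.eq_univ_of_card
  rw [r.verts_card n le_rfl]
  simp

lemma added (v : Fin (n+1)) (hv : v ≠ 0) :
    ∃ m, m + 1 ≤ n ∧ r.p (m+1) = v ∧ v ∉ (r.t m).verts := by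
  classical
  have hvn : v ∈ (r.t n).verts := r.spanning_top v
  have h0 : v ∉ (r.t 0).verts := by simp [r.verts_zero, hv]
  have hex : ∃ M, v ∈ (r.t M).verts := ⟨n, hvn⟩
  have hM : v ∈ (r.t (Nat.find hex)).verts := Nat.find_spec hex
  have hMpos : Nat.find hex ≠ 0 := fun h => h0 (h ▸ hM)
  obtain ⟨m, hm⟩ := Nat.exists_eq_succ_of_ne_zero hMpos
  have hle : Nat.find hex ≤ n := Nat.find_le hvn
  have hnot : v ∉ (r.t m).verts := Nat.find_min hex (by omega)
  rw [hm] at hM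
  rw [r.verts_succ m (by omega)] at hM
  rcases Finset.mem_insert.1 hM with rfl | hmem
  · exact ⟨m, by omega, rfl, hnot⟩
  · exact absurd hmem hnot

end PhiRun
end RunBasics
section Master
variable {n : ℕ} {E : Fin (n+1) → Fin (n+1) → ℕ} {P : TreeOrders n E} {b : Fin (n+1) → ℕ}

/-- The hypothesis of the master induction. -/
def MasterHyp (P : TreeOrders n E) (b : Fin (n+1) → ℕ) (r : PhiRun E P b)
    (T : Subtree n E) : Prop :=
  ∀ m, m + 1 ≤ n → (r.t m).IsSubtreeOf T → Initial P T (r.t m).verts →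
    (∀ j, j ∉ (r.t m).verts → b j + 1 ≤ ∑ i ∈ (r.t m).verts, E j i →
      ∃ q k, T.par j = some (q, k) ∧ ChosenEdge E (r.t m).verts (P.lt T) (b j) j q k) ∧
    (∀ w, w ∉ (r.t m).verts → (∀ u, u ∉ (r.t m).verts → u ≠ w → P.lt T w u) →
      b w + 1 ≤ ∑ i ∈ (r.t m).verts, E w i)

lemma filter_lt_eq (hP : P.Proper) {t' T : Subtree n E} (hsub : t'.IsSubtreeOf T)
    {q : Fin (n+1)} (hq : q ∈ t'.verts) :
    t'.verts.filter (fun i => P.lt t' i q) = t'.verts.filter (fun i => P.lt T i q) :=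
  Finset.filter_congr (fun i hi => hP.2.2.2.2 t' T hsub i hi q hq)

lemma chosen_transport (hP : P.Proper) {t' T : Subtree n E} (hsub : t'.IsSubtreeOf T)
    {bj : ℕ} {j q : Fin (n+1)} {k : ℕ}
    (h : ChosenEdge E t'.verts (P.lt t') bj j q k) :
    ChosenEdge E t'.verts (P.lt T) bj j q k := by
  obtain ⟨h1, h2, h3⟩ := h
  exact ⟨h1, h2, by rw [← filter_lt_eq hP hsub h1]; exact h3⟩

lemma master (hP : P.Proper) (r : PhiRun E P b) (T : Subtree n E) (hT : T.IsSpanning)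
    (HT : MasterHyp P b r T) :
    ∀ m, m ≤ n → (r.t m).IsSubtreeOf T ∧ Initial P T (r.t m).verts := by
  have htotT : ∀ i j : Fin (n+1), i ≠ j → P.lt T i j ∨ P.lt T j i :=
    fun i j hij => hP.2.2.1 T i (hT i) j (hT j) hij
  have htransT : ∀ i j k : Fin (n+1), P.lt T i j → P.lt T j k → P.lt T i k :=
    fun i j k => hP.2.1 T i (hT i) j (hT j) k (hT k)
  have hirrT : ∀ i : Fin (n+1), ¬ P.lt T i i := fun i => hP.1 T i (hT i)
  have hasym : ∀ i j, P.lt T i j → P.lt T j i → False :=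
    fun i j h1 h2 => hirrT i (htransT i j i h1 h2)
  intro m
  induction m with
  | zero =>
    intro _
    constructor
    · intro v hv; rw [r.init v] at hv; simp at hv
    · intro v hv w hw
      rw [r.verts_zero] at hv hw
      simp only [Finset.mem_singleton] at hv
      subst hv
      exact root_lt hP T (hT w) (by simpa using hw)
  | succ m ih =>
    intro h
    obtain ⟨ihsub, ihinit⟩ := ih (by omega)
    obtain ⟨HT1, HT2⟩ := HT m h ihsub ihinit
    set S := (r.t m).verts with hS
    have hpelig := r.eligible' m h
    have hpnot := (r.newvert' m h).1
    obtain ⟨q', k', hpar', hch'⟩ := r.chosen' m h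
    have hchT' : ChosenEdge E S (P.lt T) (b (r.p (m+1))) (r.p (m+1)) q' k' :=
      chosen_transport hP ihsub hch'
    obtain ⟨q, k, hTpar, hchT⟩ := HT1 (r.p (m+1)) hpnot hpelig
    obtain ⟨rfl, rfl⟩ : q' = q ∧ k' = k := chosen_unique_gen (P.lt T) (E (r.p (m+1))) S
      (fun i _ j _ => htotT i j) (fun i _ j _ l _ => htransT i j l) (fun i _ => hirrT i)
      (b (r.p (m+1))) hchT' hchT
    have hsub : (r.t (m+1)).IsSubtreeOf T := by
      intro v hv
      rcases eq_or_ne v (r.p (m+1)) with rfl | hvne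
      · rw [hpar', hTpar]
      · rw [(r.newvert' m h).2 v hvne] at hv ⊢
        exact ihsub v hv
    refine ⟨hsub, ?_⟩
    have hcompl_ne : Sᶜ.Nonempty := ⟨r.p (m+1), by simpa using hpnot⟩
    obtain ⟨w, hwc, hwmin0⟩ := exists_rel_min (P.lt T) Sᶜ hcompl_ne
      (fun i _ j _ hij => htotT i j hij) (fun i _ j _ l _ => htransT i j l)
    have hwS : w ∉ S := by simpa using hwc
    have hwmin : ∀ u, u ∉ S → u ≠ w → P.lt T w u := fun u hu hne =>
      hwmin0 u (by simpa using hu) hne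
    have hwelig : b w + 1 ≤ ∑ i ∈ S, E w i := HT2 w hwS hwmin
    obtain ⟨taux, htaux_sub, htaux_verts, htaux_chosen, htaux_min⟩ := r.minimal' m h
    have htauxT : taux.IsSubtreeOf T := by
      intro v hv
      have hvmem : v ∈ taux.verts := Subtree.mem_verts.2 (Or.inr hv)
      rcases (htaux_verts v).1 hvmem with hvS | ⟨hvS, hvelig⟩
      · have hv0 : v ≠ 0 := by
          intro e; rw [e, taux.root_par] at hv; simp at hv
        have hvsome : ((r.t m).par v).isSome := by
          rcases Subtree.mem_verts.1 hvS with e | hs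
          · exact absurd e hv0
          · exact hs
        rw [← htaux_sub v hvsome]
        exact ihsub v hvsome
      · obtain ⟨q1, k1, hq1, hch1⟩ := htaux_chosen v hvS hvelig
        obtain ⟨q2, k2, hq2, hch2⟩ := HT1 v hvS hvelig
        have hch1T : ChosenEdge E S (P.lt T) (b v) v q1 k1 :=
          chosen_transport hP ihsub hch1
        have huv := chosen_unique_gen (P.lt T) (E v) S
          (fun i _ j _ => htotT i j) (fun i _ j _ l _ => htransT i j l) (fun i _ => hirrT i)
          (b v) hch1T hch2
        rw [hq1, hq2, huv.1, huv.2]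
    have hpw : r.p (m+1) = w := by
      by_contra hne
      have h1 : P.lt taux (r.p (m+1)) w := htaux_min w hwS hwelig (fun e => hne e.symm)
      have hpmem : r.p (m+1) ∈ taux.verts := (htaux_verts _).2 (Or.inr ⟨hpnot, hpelig⟩)
      have hwmem : w ∈ taux.verts := (htaux_verts _).2 (Or.inr ⟨hwS, hwelig⟩)
      have h1T : P.lt T (r.p (m+1)) w := (hP.2.2.2.2 taux T htauxT _ hpmem _ hwmem).1 h1
      exact hasym _ _ h1T (hwmin _ hpnot hne)
    intro v hv u hu
    rw [r.verts_succ m h] at hv hu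
    rcases Finset.mem_insert.1 hv with rfl | hvS
    · have huS : u ∉ S := fun hx => hu (Finset.mem_insert_of_mem hx)
      have hune : u ≠ r.p (m+1) := fun e => hu (e ▸ Finset.mem_insert_self _ _)
      rw [hpw]
      exact hwmin u huS (fun e => hune (e.trans hpw.symm))
    · exact ihinit v hvS u (fun hx => hu (Finset.mem_insert_of_mem hx))

lemma reconstruct (hP : P.Proper) (r : PhiRun E P b) (T : Subtree n E) (hT : T.IsSpanning)
    (HT : MasterHyp P b r T) : ∀ v, (r.t n).par v = T.par v := by
  have h := master hP r T hT HT n le_rfl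
  intro v
  by_cases hv : ((r.t n).par v).isSome
  · exact h.1 v hv
  · have hvmem : v ∈ (r.t n).verts := r.spanning_top v
    rcases Subtree.mem_verts.1 hvmem with rfl | hs
    · rw [(r.t n).root_par, T.root_par]
    · exact absurd hs hv

end Master
section Hyps
variable {n : ℕ} {E : Fin (n+1) → Fin (n+1) → ℕ} {P : TreeOrders n E} {b : Fin (n+1) → ℕ}

lemma masterHyp_theta (hP : P.Proper) (T : Subtree n E) (hT : T.IsSpanning)
    (r : PhiRun E P (Theta E P T)) : MasterHyp P (Theta E P T) r T := by
  have htotT : ∀ i j : Fin (n+1), i ≠ j → P.lt T i j ∨ P.lt T j i :=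
    fun i j hij => hP.2.2.1 T i (hT i) j (hT j) hij
  have htransT : ∀ i j k : Fin (n+1), P.lt T i j → P.lt T j k → P.lt T i k :=
    fun i j k => hP.2.1 T i (hT i) j (hT j) k (hT k)
  have hirrT : ∀ i : Fin (n+1), ¬ P.lt T i i := fun i => hP.1 T i (hT i)
  have hasym : ∀ i j, P.lt T i j → P.lt T j i → False :=
    fun i j h1 h2 => hirrT i (htransT i j i h1 h2)
  intro m hm hsub hinit
  set S := (r.t m).verts with hSdef
  have h0S : (0 : Fin (n+1)) ∈ S := (r.t m).root_mem
  constructor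
  · intro j hjS hjelig
    have hj0 : j ≠ 0 := fun e => hjS (e ▸ h0S)
    have hsome : (T.par j).isSome := by
      rcases Subtree.mem_verts.1 (hT j) with e | hs
      · exact absurd e hj0
      · exact hs
    obtain ⟨⟨q, k⟩, hqk⟩ := Option.isSome_iff_exists.1 hsome
    have hθ : Theta E P T j = (∑ i ∈ Finset.univ.filter (fun i => P.lt T i q), E j i) + k := by
      simp [Theta, hqk, thetaVal]
    have hqS : q ∈ S := by
      by_contra hqS
      have hsubf : S ⊆ Finset.univ.filter (fun i => P.lt T i q) := by
        intro v hv
        simp only [Finset.mem_filter, Finset.mem_univ, true_and]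
        exact hinit v hv q hqS
      have hle := Finset.sum_le_sum_of_subset (f := E j) hsubf
      rw [hθ] at hjelig
      omega
    have hfe : Finset.univ.filter (fun i => P.lt T i q) = S.filter (fun i => P.lt T i q) := by
      ext i
      simp only [Finset.mem_filter, Finset.mem_univ, true_and]
      constructor
      · intro hlt
        refine ⟨?_, hlt⟩
        by_contra hiS
        exact hasym _ _ hlt (hinit q hqS i hiS)
      · exact fun h => h.2
    exact ⟨q, k, hqk, hqS, T.edge_valid j q k hqk, by rw [← hfe, hθ]⟩
  · intro w hwS hwmin
    have hw0 : w ≠ 0 := fun e => hwS (e ▸ h0S)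
    have hsome : (T.par w).isSome := by
      rcases Subtree.mem_verts.1 (hT w) with e | hs
      · exact absurd e hw0
      · exact hs
    obtain ⟨⟨q, k⟩, hqk⟩ := Option.isSome_iff_exists.1 hsome
    have hθ : Theta E P T w = (∑ i ∈ Finset.univ.filter (fun i => P.lt T i q), E w i) + k := by
      simp [Theta, hqk, thetaVal]
    have hqw : P.lt T q w := hP.2.2.2.1 T w q k hqk
    have hqS : q ∈ S := by
      by_contra hqS
      have hne : q ≠ w := fun e => hirrT w (e ▸ hqw)
      exact hasym _ _ hqw (hwmin q hqS hne)
    have hfsub : Finset.univ.filter (fun i => P.lt T i q) ⊆ S := by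
      intro i hi
      simp only [Finset.mem_filter, Finset.mem_univ, true_and] at hi
      by_contra hiS
      have hiw : P.lt T i w := htransT _ _ _ hi hqw
      have hne : i ≠ w := fun e => hirrT w (e ▸ hiw)
      exact hasym _ _ hiw (hwmin i hiS hne)
    have hqnf : q ∉ Finset.univ.filter (fun i => P.lt T i q) := by simp [hirrT q]
    have hins : insert q (Finset.univ.filter (fun i => P.lt T i q)) ⊆ S :=
      Finset.insert_subset_iff.2 ⟨hqS, hfsub⟩
    have hle := Finset.sum_le_sum_of_subset (f := E w) hins
    rw [Finset.sum_insert hqnf] at hle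
    have hkE : k < E w q := T.edge_valid w q k hqk
    rw [hθ]
    omega

lemma masterHyp_self (hP : P.Proper) (r : PhiRun E P b) : MasterHyp P b r (r.t n) := by
  set T := r.t n with hTdef
  have hT : T.IsSpanning := r.spanning_top
  have htotT : ∀ i j : Fin (n+1), i ≠ j → P.lt T i j ∨ P.lt T j i :=
    fun i j hij => hP.2.2.1 T i (hT i) j (hT j) hij
  have htransT : ∀ i j k : Fin (n+1), P.lt T i j → P.lt T j k → P.lt T i k :=
    fun i j k => hP.2.1 T i (hT i) j (hT j) k (hT k)
  have hirrT : ∀ i : Fin (n+1), ¬ P.lt T i i := fun i => hP.1 T i (hT i)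
  have hasym : ∀ i j, P.lt T i j → P.lt T j i → False :=
    fun i j h1 h2 => hirrT i (htransT i j i h1 h2)
  intro m hm hsub hinit
  set S := (r.t m).verts with hSdef
  have h0S : (0 : Fin (n+1)) ∈ S := (r.t m).root_mem
  constructor
  · intro j hjS hjelig
    have hj0 : j ≠ 0 := fun e => hjS (e ▸ h0S)
    obtain ⟨M, hMn, hMj, hMnot⟩ := r.added j hj0
    have hmM : m ≤ M := by
      by_contra hlt
      push_neg at hlt
      have hjmem : j ∈ (r.t (M+1)).verts := by
        rw [r.verts_succ M hMn, hMj]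
        exact Finset.mem_insert_self _ _
      exact hjS ((r.chain (M+1) m (by omega) (by omega)).verts_subset hjmem)
    obtain ⟨q, k, hpar, hch⟩ := r.chosen' M hMn
    rw [hMj] at hpar hch
    have hsome : ((r.t (M+1)).par j).isSome := by simp [hpar]
    have hTparj : T.par j = some (q, k) := by
      rw [hTdef, ← (r.chain (M+1) n (by omega) le_rfl) j hsome]
      exact hpar
    have hchT : ChosenEdge E (r.t M).verts (P.lt T) (b j) j q k :=
      chosen_transport hP (r.chain M n (by omega) le_rfl) hch
    obtain ⟨taux, htaux_sub, htaux_verts, htaux_chosen, htaux_min⟩ := r.minimal' m hm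
    obtain ⟨q1, k1, hq1, hch1⟩ := htaux_chosen j hjS hjelig
    have hch1T : ChosenEdge E S (P.lt T) (b j) j q1 k1 := chosen_transport hP hsub hch1
    have hSM : S ⊆ (r.t M).verts := (r.chain m M hmM (by omega)).verts_subset
    have hch1TM : ChosenEdge E (r.t M).verts (P.lt T) (b j) j q1 k1 := by
      obtain ⟨h1, h2, h3⟩ := hch1T
      refine ⟨hSM h1, h2, ?_⟩
      have hfe : (r.t M).verts.filter (fun i => P.lt T i q1) =
          S.filter (fun i => P.lt T i q1) := by
        ext i
        simp only [Finset.mem_filter]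
        constructor
        · rintro ⟨hiM, hlt⟩
          refine ⟨?_, hlt⟩
          by_contra hiS
          exact hasym _ _ hlt (hinit q1 h1 i hiS)
        · rintro ⟨hiS, hlt⟩
          exact ⟨hSM hiS, hlt⟩
      rw [hfe]
      exact h3
    have huv := chosen_unique_gen (P.lt T) (E j) (r.t M).verts
      (fun i _ j' _ => htotT i j') (fun i _ j' _ l _ => htransT i j' l) (fun i _ => hirrT i)
      (b j) hchT hch1TM
    exact ⟨q1, k1, by rw [hTparj, huv.1, huv.2], hch1T⟩
  · intro w hwS hwmin
    have hw0 : w ≠ 0 := fun e => hwS (e ▸ h0S)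
    obtain ⟨M, hMn, hMw, hMnot⟩ := r.added w hw0
    have hmM : m ≤ M := by
      by_contra hlt
      push_neg at hlt
      have hwmem : w ∈ (r.t (M+1)).verts := by
        rw [r.verts_succ M hMn, hMw]
        exact Finset.mem_insert_self _ _
      exact hwS ((r.chain (M+1) m (by omega) (by omega)).verts_subset hwmem)
    obtain ⟨q, k, hpar, hch⟩ := r.chosen' M hMn
    rw [hMw] at hpar hch
    have hsome : ((r.t (M+1)).par w).isSome := by simp [hpar]
    have hTparw : T.par w = some (q, k) := by
      rw [hTdef, ← (r.chain (M+1) n (by omega) le_rfl) w hsome]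
      exact hpar
    have hqw : P.lt T q w := hP.2.2.2.1 T w q k hTparw
    have hchT : ChosenEdge E (r.t M).verts (P.lt T) (b w) w q k :=
      chosen_transport hP (r.chain M n (by omega) le_rfl) hch
    have hqS : q ∈ S := by
      by_contra hqS
      have hne : q ≠ w := fun e => hirrT w (e ▸ hqw)
      exact hasym _ _ hqw (hwmin q hqS hne)
    have hAsub : (r.t M).verts.filter (fun i => P.lt T i q) ⊆ S := by
      intro i hi
      obtain ⟨hiM, hiq⟩ := Finset.mem_filter.1 hi
      by_contra hiS
      have hiw : P.lt T i w := htransT _ _ _ hiq hqw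
      have hne : i ≠ w := fun e => hirrT w (e ▸ hiw)
      exact hasym _ _ hiw (hwmin i hiS hne)
    have hqnf : q ∉ (r.t M).verts.filter (fun i => P.lt T i q) := by
      simp [hirrT q]
    have hins : insert q ((r.t M).verts.filter (fun i => P.lt T i q)) ⊆ S :=
      Finset.insert_subset_iff.2 ⟨hqS, hAsub⟩
    have hle := Finset.sum_le_sum_of_subset (f := E w) hins
    rw [Finset.sum_insert hqnf] at hle
    obtain ⟨_, hkE, hsumeq⟩ := hchT
    omega

lemma theta_of_run (hP : P.Proper) (r : PhiRun E P b) (hb0 : b 0 = 0) :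
    Theta E P (r.t n) = b := by
  set T := r.t n with hTdef
  have hT : T.IsSpanning := r.spanning_top
  have htransT : ∀ i j k : Fin (n+1), P.lt T i j → P.lt T j k → P.lt T i k :=
    fun i j k => hP.2.1 T i (hT i) j (hT j) k (hT k)
  have hirrT : ∀ i : Fin (n+1), ¬ P.lt T i i := fun i => hP.1 T i (hT i)
  have hasym : ∀ i j, P.lt T i j → P.lt T j i → False :=
    fun i j h1 h2 => hirrT i (htransT i j i h1 h2)
  have hmaster := master hP r T hT (masterHyp_self hP r)
  funext j
  rcases eq_or_ne j 0 with rfl | hj0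
  · rw [hb0]
    simp [Theta, T.root_par]
  · obtain ⟨M, hMn, hMj, hMnot⟩ := r.added j hj0
    obtain ⟨q, k, hpar, hch⟩ := r.chosen' M hMn
    rw [hMj] at hpar hch
    have hsome : ((r.t (M+1)).par j).isSome := by simp [hpar]
    have hTparj : T.par j = some (q, k) := by
      rw [hTdef, ← (r.chain (M+1) n (by omega) le_rfl) j hsome]
      exact hpar
    have hinit : Initial P T (r.t M).verts := (hmaster M (by omega)).2
    have hchT : ChosenEdge E (r.t M).verts (P.lt T) (b j) j q k :=
      chosen_transport hP (r.chain M n (by omega) le_rfl) hch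
    have hθ : Theta E P T j = (∑ i ∈ Finset.univ.filter (fun i => P.lt T i q), E j i) + k := by
      simp [Theta, hTparj, thetaVal]
    have hfe : Finset.univ.filter (fun i => P.lt T i q) =
        (r.t M).verts.filter (fun i => P.lt T i q) := by
      ext i
      simp only [Finset.mem_filter, Finset.mem_univ, true_and]
      constructor
      · intro hlt
        refine ⟨?_, hlt⟩
        by_contra hiS
        exact hasym _ _ hlt (hinit q hchT.1 i hiS)
      · exact fun h => h.2
    rw [hθ, hfe]
    exact hchT.2.2

lemma theta_parking (hP : P.Proper) (T : Subtree n E) (hT : T.IsSpanning) :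
    IsParking E (Theta E P T) ∧ Theta E P T 0 = 0 := by
  have htotT : ∀ i j : Fin (n+1), i ≠ j → P.lt T i j ∨ P.lt T j i :=
    fun i j hij => hP.2.2.1 T i (hT i) j (hT j) hij
  have htransT : ∀ i j k : Fin (n+1), P.lt T i j → P.lt T j k → P.lt T i k :=
    fun i j k => hP.2.1 T i (hT i) j (hT j) k (hT k)
  have hirrT : ∀ i : Fin (n+1), ¬ P.lt T i i := fun i => hP.1 T i (hT i)
  have hasym : ∀ i j, P.lt T i j → P.lt T j i → False :=
    fun i j h1 h2 => hirrT i (htransT i j i h1 h2)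
  constructor
  · intro U hU hU0
    obtain ⟨j, hjU, hjmin⟩ := exists_rel_min (P.lt T) U hU
      (fun i _ j' _ hij => htotT i j' hij) (fun i _ j' _ l _ => htransT i j' l)
    have hj0 : j ≠ 0 := fun e => hU0 (e ▸ hjU)
    have hsome : (T.par j).isSome := by
      rcases Subtree.mem_verts.1 (hT j) with e | hs
      · exact absurd e hj0
      · exact hs
    obtain ⟨⟨q, k⟩, hqk⟩ := Option.isSome_iff_exists.1 hsome
    have hθ : Theta E P T j = (∑ i ∈ Finset.univ.filter (fun i => P.lt T i q), E j i) + k := by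
      simp [Theta, hqk, thetaVal]
    have hqj : P.lt T q j := hP.2.2.2.1 T j q k hqk
    have hqU : q ∉ U := by
      intro hqU
      have hne : q ≠ j := fun e => hirrT j (e ▸ hqj)
      exact hasym _ _ hqj (hjmin q hqU hne)
    have hfsub : Finset.univ.filter (fun i => P.lt T i q) ⊆ Uᶜ := by
      intro i hi
      simp only [Finset.mem_filter, Finset.mem_univ, true_and] at hi
      rw [Finset.mem_compl]
      intro hiU
      have hij : P.lt T i j := htransT _ _ _ hi hqj
      have hne : i ≠ j := fun e => hirrT j (e ▸ hij)
      exact hasym _ _ hij (hjmin i hiU hne)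
    have hqnf : q ∉ Finset.univ.filter (fun i => P.lt T i q) := by simp [hirrT q]
    have hins : insert q (Finset.univ.filter (fun i => P.lt T i q)) ⊆ Uᶜ :=
      Finset.insert_subset_iff.2 ⟨Finset.mem_compl.2 hqU, hfsub⟩
    have hle := Finset.sum_le_sum_of_subset (f := E j) hins
    rw [Finset.sum_insert hqnf] at hle
    have hkE : k < E j q := T.edge_valid j q k hqk
    refine ⟨j, hjU, ?_⟩
    rw [hθ]
    omega
  · simp [Theta, T.root_par]

end Hyps
section Construct
variable {n : ℕ} {E : Fin (n+1) → Fin (n+1) → ℕ} {P : TreeOrders n E}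

def trivTree (n : ℕ) (E : Fin (n+1) → Fin (n+1) → ℕ) : Subtree n E where
  par := fun _ => none
  root_par := rfl
  edge_valid := by intro v p k h; cases h
  parent_mem := by intro v p k h; cases h
  reaches := by intro v h; simp at h

noncomputable def eligSet (b : Fin (n+1) → ℕ) (tp : Subtree n E) : Finset (Fin (n+1)) :=
  Finset.univ.filter (fun j => j ∉ tp.verts ∧ b j + 1 ≤ ∑ i ∈ tp.verts, E j i)

lemma mem_eligSet {b : Fin (n+1) → ℕ} {tp : Subtree n E} {j : Fin (n+1)} :
    j ∈ eligSet b tp ↔ j ∉ tp.verts ∧ b j + 1 ≤ ∑ i ∈ tp.verts, E j i := by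
  simp [eligSet]

lemma eligSet_chosen_exists (hP : P.Proper) (b : Fin (n+1) → ℕ) (tp : Subtree n E)
    {j : Fin (n+1)} (hj : j ∈ eligSet b tp) :
    ∃ q k, ChosenEdge E tp.verts (P.lt tp) (b j) j q k := by
  obtain ⟨hjv, hje⟩ := mem_eligSet.1 hj
  obtain ⟨q, hq, k, hk, hsum⟩ := chosen_exists_gen (P.lt tp) (E j) tp.verts
    (fun i hi j' hj' => hP.2.2.1 tp i hi j' hj')
    (fun i hi j' hj' l hl => hP.2.1 tp i hi j' hj' l hl)
    (fun i hi => hP.1 tp i hi) (b j) hje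
  exact ⟨q, k, hq, hk, hsum⟩

noncomputable def pickE (hP : P.Proper) (b : Fin (n+1) → ℕ) (tp : Subtree n E)
    (j : Fin (n+1)) : Fin (n+1) × ℕ :=
  if hj : j ∈ eligSet b tp then
    ((eligSet_chosen_exists hP b tp hj).choose,
     (eligSet_chosen_exists hP b tp hj).choose_spec.choose)
  else (0, 0)

lemma pickE_spec (hP : P.Proper) (b : Fin (n+1) → ℕ) (tp : Subtree n E)
    {j : Fin (n+1)} (hj : j ∈ eligSet b tp) :
    ChosenEdge E tp.verts (P.lt tp) (b j) j (pickE hP b tp j).1 (pickE hP b tp j).2 := by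
  rw [pickE, dif_pos hj]
  exact (eligSet_chosen_exists hP b tp hj).choose_spec.choose_spec

noncomputable def auxTree (hP : P.Proper) (b : Fin (n+1) → ℕ) (tp : Subtree n E) :
    Subtree n E where
  par := fun j => if j ∈ eligSet b tp then some (pickE hP b tp j) else tp.par j
  root_par := by
    have h0 : (0 : Fin (n+1)) ∉ eligSet b tp := fun h => (mem_eligSet.1 h).1 tp.root_mem
    simp only [if_neg h0]
    exact tp.root_par
  edge_valid := by
    intro v p k h
    by_cases hv : v ∈ eligSet b tp
    · simp only [if_pos hv] at h
      have he := Option.some.inj h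
      have spec := pickE_spec hP b tp hv
      rw [he] at spec
      exact spec.2.1
    · simp only [if_neg hv] at h
      exact tp.edge_valid v p k h
  parent_mem := by
    intro v p k h
    have hpv : p ∈ tp.verts := by
      by_cases hv : v ∈ eligSet b tp
      · simp only [if_pos hv] at h
        have he := Option.some.inj h
        have spec := pickE_spec hP b tp hv
        rw [he] at spec
        exact spec.1
      · simp only [if_neg hv] at h
        exact (Subtree.mem_of_some h).2
    have hpne : p ∉ eligSet b tp := fun hx => (mem_eligSet.1 hx).1 hpv
    rcases Subtree.mem_verts.1 hpv with e | hs
    · exact Or.inl e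
    · right
      simp only [if_neg hpne]
      exact hs
  reaches := by
    intro v hv
    have hmono : ∀ a c : Fin (n+1), (∃ k, tp.par a = some (c, k)) →
        (∃ k, (if a ∈ eligSet b tp then some (pickE hP b tp a) else tp.par a) = some (c, k)) := by
      rintro a c ⟨k, hk⟩
      have hav : a ∈ tp.verts := (Subtree.mem_of_some hk).1
      have hane : a ∉ eligSet b tp := fun hx => (mem_eligSet.1 hx).1 hav
      exact ⟨k, by rw [if_neg hane]; exact hk⟩
    by_cases hv' : v ∈ eligSet b tp
    · have spec := pickE_spec hP b tp hv'
      have hq : (pickE hP b tp v).1 ∈ tp.verts := spec.1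
      refine Relation.ReflTransGen.head (b := (pickE hP b tp v).1)
        ⟨(pickE hP b tp v).2, by simp only [if_pos hv']⟩ ?_
      rcases Subtree.mem_verts.1 hq with e | hs
      · exact e ▸ Relation.ReflTransGen.refl
      · exact Relation.ReflTransGen.mono hmono _ _ (tp.reaches _ hs)
    · simp only [if_neg hv'] at hv
      exact Relation.ReflTransGen.mono hmono _ _ (tp.reaches v hv)

lemma auxTree_par_elig (hP : P.Proper) {b : Fin (n+1) → ℕ} {tp : Subtree n E}
    {j : Fin (n+1)} (hj : j ∈ eligSet b tp) :
    (auxTree hP b tp).par j = some (pickE hP b tp j) := by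
  show (if j ∈ eligSet b tp then some (pickE hP b tp j) else tp.par j) = _
  rw [if_pos hj]

lemma auxTree_par_not (hP : P.Proper) {b : Fin (n+1) → ℕ} {tp : Subtree n E}
    {j : Fin (n+1)} (hj : j ∉ eligSet b tp) : (auxTree hP b tp).par j = tp.par j := by
  show (if j ∈ eligSet b tp then some (pickE hP b tp j) else tp.par j) = _
  rw [if_neg hj]

lemma mem_auxTree_verts (hP : P.Proper) {b : Fin (n+1) → ℕ} {tp : Subtree n E}
    {j : Fin (n+1)} : j ∈ (auxTree hP b tp).verts ↔ j ∈ tp.verts ∨ j ∈ eligSet b tp := by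
  by_cases hj : j ∈ eligSet b tp
  · simp only [hj, or_true, iff_true]
    exact Subtree.mem_verts.2 (Or.inr (by rw [auxTree_par_elig hP hj]; rfl))
  · rw [Subtree.mem_verts, auxTree_par_not hP hj]
    simp only [hj, or_false]
    exact Subtree.mem_verts.symm
  
lemma sub_auxTree (hP : P.Proper) (b : Fin (n+1) → ℕ) (tp : Subtree n E) :
    tp.IsSubtreeOf (auxTree hP b tp) := by
  intro v hv
  have hvv : v ∈ tp.verts := Subtree.mem_verts.2 (Or.inr hv)
  exact (auxTree_par_not hP (fun hx => (mem_eligSet.1 hx).1 hvv)).symm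

lemma elig_tot (hP : P.Proper) (b : Fin (n+1) → ℕ) (tp : Subtree n E) :
    ∀ i ∈ eligSet b tp, ∀ j ∈ eligSet b tp, i ≠ j →
      P.lt (auxTree hP b tp) i j ∨ P.lt (auxTree hP b tp) j i :=
  fun i hi j hj hij => hP.2.2.1 _ i ((mem_auxTree_verts hP).2 (Or.inr hi))
    j ((mem_auxTree_verts hP).2 (Or.inr hj)) hij

lemma elig_trans (hP : P.Proper) (b : Fin (n+1) → ℕ) (tp : Subtree n E) :
    ∀ i ∈ eligSet b tp, ∀ j ∈ eligSet b tp, ∀ l ∈ eligSet b tp,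
      P.lt (auxTree hP b tp) i j → P.lt (auxTree hP b tp) j l → P.lt (auxTree hP b tp) i l :=
  fun i hi j hj l hl => hP.2.1 _ i ((mem_auxTree_verts hP).2 (Or.inr hi))
    j ((mem_auxTree_verts hP).2 (Or.inr hj)) l ((mem_auxTree_verts hP).2 (Or.inr hl))

noncomputable def minP (hP : P.Proper) (b : Fin (n+1) → ℕ) (tp : Subtree n E) : Fin (n+1) :=
  if h : (eligSet b tp).Nonempty then
    (exists_rel_min (P.lt (auxTree hP b tp)) (eligSet b tp) h
      (elig_tot hP b tp) (elig_trans hP b tp)).choose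
  else 0

lemma minP_spec (hP : P.Proper) {b : Fin (n+1) → ℕ} {tp : Subtree n E}
    (h : (eligSet b tp).Nonempty) :
    minP hP b tp ∈ eligSet b tp ∧
    ∀ j ∈ eligSet b tp, j ≠ minP hP b tp → P.lt (auxTree hP b tp) (minP hP b tp) j := by
  rw [minP, dif_pos h]
  exact (exists_rel_min (P.lt (auxTree hP b tp)) (eligSet b tp) h
    (elig_tot hP b tp) (elig_trans hP b tp)).choose_spec

noncomputable def nextTree (hP : P.Proper) (b : Fin (n+1) → ℕ) (tp : Subtree n E) :
    Subtree n E where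
  par := fun v => if v = minP hP b tp ∧ v ∈ eligSet b tp then some (pickE hP b tp v)
    else tp.par v
  root_par := by
    have h0 : ¬ ((0 : Fin (n+1)) = minP hP b tp ∧ (0 : Fin (n+1)) ∈ eligSet b tp) :=
      fun h => (mem_eligSet.1 h.2).1 tp.root_mem
    simp only [if_neg h0]
    exact tp.root_par
  edge_valid := by
    intro v p k h
    by_cases hv : v = minP hP b tp ∧ v ∈ eligSet b tp
    · simp only [if_pos hv] at h
      have he := Option.some.inj h
      have spec := pickE_spec hP b tp hv.2
      rw [he] at spec
      exact spec.2.1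
    · simp only [if_neg hv] at h
      exact tp.edge_valid v p k h
  parent_mem := by
    intro v p k h
    have hpv : p ∈ tp.verts := by
      by_cases hv : v = minP hP b tp ∧ v ∈ eligSet b tp
      · simp only [if_pos hv] at h
        have he := Option.some.inj h
        have spec := pickE_spec hP b tp hv.2
        rw [he] at spec
        exact spec.1
      · simp only [if_neg hv] at h
        exact (Subtree.mem_of_some h).2
    have hpne : ¬ (p = minP hP b tp ∧ p ∈ eligSet b tp) :=
      fun hx => (mem_eligSet.1 hx.2).1 hpv
    rcases Subtree.mem_verts.1 hpv with e | hs
    · exact Or.inl e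
    · right
      simp only [if_neg hpne]
      exact hs
  reaches := by
    intro v hv
    have hmono : ∀ a c : Fin (n+1), (∃ k, tp.par a = some (c, k)) →
        (∃ k, (if a = minP hP b tp ∧ a ∈ eligSet b tp then some (pickE hP b tp a)
          else tp.par a) = some (c, k)) := by
      rintro a c ⟨k, hk⟩
      have hav : a ∈ tp.verts := (Subtree.mem_of_some hk).1
      have hane : ¬ (a = minP hP b tp ∧ a ∈ eligSet b tp) :=
        fun hx => (mem_eligSet.1 hx.2).1 hav
      exact ⟨k, by rw [if_neg hane]; exact hk⟩
    by_cases hv' : v = minP hP b tp ∧ v ∈ eligSet b tp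
    · have spec := pickE_spec hP b tp hv'.2
      have hq : (pickE hP b tp v).1 ∈ tp.verts := spec.1
      refine Relation.ReflTransGen.head (b := (pickE hP b tp v).1)
        ⟨(pickE hP b tp v).2, by simp only [if_pos hv']⟩ ?_
      rcases Subtree.mem_verts.1 hq with e | hs
      · exact e ▸ Relation.ReflTransGen.refl
      · exact Relation.ReflTransGen.mono hmono _ _ (tp.reaches _ hs)
    · simp only [if_neg hv'] at hv
      exact Relation.ReflTransGen.mono hmono _ _ (tp.reaches v hv)

lemma nextTree_par_min (hP : P.Proper) {b : Fin (n+1) → ℕ} {tp : Subtree n E}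
    (h : (eligSet b tp).Nonempty) :
    (nextTree hP b tp).par (minP hP b tp) = some (pickE hP b tp (minP hP b tp)) := by
  show (if _ ∧ _ then _ else _) = _
  rw [if_pos ⟨rfl, (minP_spec hP h).1⟩]

lemma nextTree_par_other (hP : P.Proper) {b : Fin (n+1) → ℕ} {tp : Subtree n E}
    {v : Fin (n+1)} (hv : v ≠ minP hP b tp) : (nextTree hP b tp).par v = tp.par v := by
  show (if _ ∧ _ then _ else _) = _
  rw [if_neg (fun hc => hv hc.1)]

lemma nextTree_par_notelig (hP : P.Proper) {b : Fin (n+1) → ℕ} {tp : Subtree n E}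
    {v : Fin (n+1)} (hv : v ∉ eligSet b tp) : (nextTree hP b tp).par v = tp.par v := by
  show (if _ ∧ _ then _ else _) = _
  rw [if_neg (fun hc => hv hc.2)]

lemma sub_nextTree (hP : P.Proper) (b : Fin (n+1) → ℕ) (tp : Subtree n E) :
    tp.IsSubtreeOf (nextTree hP b tp) := by
  intro v hv
  have hvv : v ∈ tp.verts := Subtree.mem_verts.2 (Or.inr hv)
  exact (nextTree_par_notelig hP (fun hx => (mem_eligSet.1 hx).1 hvv)).symm

lemma nextTree_verts (hP : P.Proper) {b : Fin (n+1) → ℕ} {tp : Subtree n E}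
    (h : (eligSet b tp).Nonempty) :
    (nextTree hP b tp).verts = insert (minP hP b tp) tp.verts := by
  ext v
  rcases eq_or_ne v (minP hP b tp) with rfl | hv
  · simp only [Finset.mem_insert, true_or, iff_true]
    exact Subtree.mem_verts.2 (Or.inr (by rw [nextTree_par_min hP h]; rfl))
  · rw [Subtree.mem_verts, nextTree_par_other hP hv, Finset.mem_insert]
    simp only [hv, false_or]
    exact Subtree.mem_verts.symm

end Construct
section RunExists
variable {n : ℕ} {E : Fin (n+1) → Fin (n+1) → ℕ} {P : TreeOrders n E}

noncomputable def runT (hP : P.Proper) (b : Fin (n+1) → ℕ) : ℕ → Subtree n E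
  | 0 => trivTree n E
  | (m+1) => nextTree hP b (runT hP b m)

lemma runT_succ (hP : P.Proper) (b : Fin (n+1) → ℕ) (m : ℕ) :
    runT hP b (m+1) = nextTree hP b (runT hP b m) := rfl

lemma trivTree_verts : (trivTree n E).verts = {0} := by
  ext v; simp [Subtree.mem_verts, trivTree]

lemma elig_nonempty {b : Fin (n+1) → ℕ} (hb : IsParking E b) (tp : Subtree n E)
    (h : tp.verts ≠ Finset.univ) : (eligSet b tp).Nonempty := by
  have hc : (tp.vertsᶜ).Nonempty := by
    by_contra h'
    rw [Finset.not_nonempty_iff_eq_empty] at h'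
    exact h (by
      apply Finset.eq_univ_of_forall
      intro v
      by_contra hv
      have : v ∈ tp.vertsᶜ := Finset.mem_compl.2 hv
      rw [h'] at this
      simp at this)
  have h0 : (0 : Fin (n+1)) ∉ tp.vertsᶜ := by simp [tp.root_mem]
  obtain ⟨j, hjU, hjlt⟩ := hb tp.vertsᶜ hc h0
  rw [compl_compl] at hjlt
  exact ⟨j, mem_eligSet.2 ⟨Finset.mem_compl.1 hjU, by omega⟩⟩

lemma runT_card (hP : P.Proper) {b : Fin (n+1) → ℕ} (hb : IsParking E b) :
    ∀ m, m ≤ n → ((runT hP b m).verts).card = m + 1 := by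
  intro m
  induction m with
  | zero => intro _; simp [runT, trivTree_verts]
  | succ m ih =>
    intro h
    have hcard := ih (by omega)
    have hne : (runT hP b m).verts ≠ Finset.univ := by
      intro he
      rw [he, Finset.card_univ] at hcard
      simp at hcard
      omega
    have helig := elig_nonempty hb _ hne
    rw [runT_succ, nextTree_verts hP helig, Finset.card_insert_of_notMem
      ((mem_eligSet.1 (minP_spec hP helig).1).1), hcard]

lemma runT_ne_univ (hP : P.Proper) {b : Fin (n+1) → ℕ} (hb : IsParking E b) {m : ℕ}
    (h : m + 1 ≤ n) : (runT hP b m).verts ≠ Finset.univ := by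
  intro he
  have := runT_card hP hb m (by omega)
  rw [he, Finset.card_univ] at this
  simp at this
  omega

lemma run_exists (hP : P.Proper) {b : Fin (n+1) → ℕ} (hb : IsParking E b) :
    Nonempty (PhiRun E P b) := by
  refine ⟨⟨runT hP b,
    fun m => match m with | 0 => 0 | (m'+1) => minP hP b (runT hP b m'),
    fun v => rfl, rfl, ?_, ?_, ?_, ?_, ?_⟩⟩
  · intro m h1 h2
    obtain ⟨m', rfl⟩ := Nat.exists_eq_succ_of_ne_zero (Nat.one_le_iff_ne_zero.mp h1)
    simp only [Nat.add_sub_cancel, Nat.succ_sub_one, runT_succ]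
    exact sub_nextTree hP b _
  · intro m h1 h2
    obtain ⟨m', rfl⟩ := Nat.exists_eq_succ_of_ne_zero (Nat.one_le_iff_ne_zero.mp h1)
    have helig := elig_nonempty hb _ (runT_ne_univ hP hb (m := m') (by omega))
    simp only [Nat.add_sub_cancel, Nat.succ_sub_one, runT_succ]
    exact ⟨(mem_eligSet.1 (minP_spec hP helig).1).1,
      fun v hv => nextTree_par_other hP hv⟩
  · intro m h1 h2
    obtain ⟨m', rfl⟩ := Nat.exists_eq_succ_of_ne_zero (Nat.one_le_iff_ne_zero.mp h1)
    have helig := elig_nonempty hb _ (runT_ne_univ hP hb (m := m') (by omega))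
    simp only [Nat.add_sub_cancel, Nat.succ_sub_one]
    exact (mem_eligSet.1 (minP_spec hP helig).1).2
  · intro m h1 h2
    obtain ⟨m', rfl⟩ := Nat.exists_eq_succ_of_ne_zero (Nat.one_le_iff_ne_zero.mp h1)
    have helig := elig_nonempty hb _ (runT_ne_univ hP hb (m := m') (by omega))
    simp only [Nat.add_sub_cancel, Nat.succ_sub_one, runT_succ]
    exact ⟨(pickE hP b (runT hP b m') (minP hP b (runT hP b m'))).1,
      (pickE hP b (runT hP b m') (minP hP b (runT hP b m'))).2,
      nextTree_par_min hP helig, pickE_spec hP b _ (minP_spec hP helig).1⟩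
  · intro m h1 h2
    obtain ⟨m', rfl⟩ := Nat.exists_eq_succ_of_ne_zero (Nat.one_le_iff_ne_zero.mp h1)
    have helig := elig_nonempty hb _ (runT_ne_univ hP hb (m := m') (by omega))
    simp only [Nat.add_sub_cancel, Nat.succ_sub_one]
    refine ⟨auxTree hP b (runT hP b m'), sub_auxTree hP b _, ?_, ?_, ?_⟩
    · intro j
      rw [mem_auxTree_verts hP, mem_eligSet]
    · intro j hj1 hj2
      have hj : j ∈ eligSet b (runT hP b m') := mem_eligSet.2 ⟨hj1, hj2⟩
      exact ⟨_, _, auxTree_par_elig hP hj, pickE_spec hP b _ hj⟩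
    · intro j hj1 hj2 hne'
      exact (minP_spec hP helig).2 j (mem_eligSet.2 ⟨hj1, hj2⟩) hne'

lemma masterHyp_theta' (hP : P.Proper) (T : Subtree n E) (hT : T.IsSpanning)
    {b : Fin (n+1) → ℕ} (hbT : b = Theta E P T) (r : PhiRun E P b) :
    MasterHyp P b r T := by
  subst hbT
  exact masterHyp_theta hP T hT r

end RunExists
/-- Φ ∘ Θ = id: a run of the construction Φ on Θ(T') recovers the spanning
tree `T'`; consequently Θ is a bijection between the spanning trees of `G`
rooted at `0` and the `G`-parking functions. -/
theorem stmt_15 (n : ℕ) (E : Fin (n+1) → Fin (n+1) → ℕ)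
    (P : TreeOrders n E) (hP : P.Proper)
    (T' : Subtree n E) (hT' : T'.IsSpanning)
    (r : PhiRun E P (Theta E P T')) :
    (∀ v, (r.t n).par v = T'.par v) ∧
      Set.BijOn (Theta E P) {T : Subtree n E | T.IsSpanning}
        {b : Fin (n+1) → ℕ | IsParking E b ∧ b 0 = 0} := by
  constructor
  · exact reconstruct hP r T' hT' (masterHyp_theta' hP T' hT' rfl r)
  · refine ⟨?_, ?_, ?_⟩
    · intro T hT
      exact theta_parking hP T hT
    · intro T1 h1 T2 h2 heq
      have hb : IsParking E (Theta E P T1) := (theta_parking hP T1 h1).1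
      obtain ⟨r1⟩ := run_exists hP hb
      have e1 := reconstruct hP r1 T1 h1 (masterHyp_theta' hP T1 h1 rfl r1)
      have e2 := reconstruct hP r1 T2 h2 (masterHyp_theta' hP T2 h2 heq r1)
      exact Subtree.ext' (fun v => (e1 v).symm.trans (e2 v))
    · intro b hbmem
      obtain ⟨hb, hb0⟩ := hbmem
      obtain ⟨r1⟩ := run_exists hP hb
      exact ⟨r1.t n, r1.spanning_top, theta_of_run hP r1 hb0⟩
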